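/- Let k be a field and s ≥ 3 an integer. Then the polynomial f = XY(Z+U) − U^s Z is a prime element of the polynomial ring k[X,Y,Z,U]. -/

import Mathlib

open MvPolynomial

section Aux

variable {k : Type*} [Field k]

private lemma primeX0 : Prime (X 0 : MvPolynomial (Fin 3) k) := by
  rw [← MulEquiv.prime_iff (MvPolynomial.finSuccEquiv k 2).toMulEquiv]
  have : (MvPolynomial.finSuccEquiv k 2).toMulEquiv (X 0 : MvPolynomial (Fin 3) k) =
      Polynomial.X := by
    show (MvPolynomial.finSuccEquiv k 2) (X 0 : MvPolynomial (Fin 3) k) = Polynomial.X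
    exact MvPolynomial.finSuccEquiv_X_zero
  rw [this]
  exact Polynomial.prime_X

private lemma primeXi (i : Fin 3) : Prime (X i : MvPolynomial (Fin 3) k) := by
  have h := primeX0 (k := k)
  rw [← MulEquiv.prime_iff (renameEquiv k (Equiv.swap (0 : Fin 3) i)).toMulEquiv] at h
  simpa using h

private lemma notdvdX {i j : Fin 3} (h : i ≠ j) :
    ¬ (X i : MvPolynomial (Fin 3) k) ∣ X j := by
  intro hd
  have := (eval (fun t : Fin 3 => if t = i then (0 : k) else 1)).map_dvd hd
  simp [h.symm] at this

private lemma relXX {i j : Fin 3} (h : i ≠ j) :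
    IsRelPrime (X i : MvPolynomial (Fin 3) k) (X j) := by
  intro d hdi hdj
  obtain ⟨e, he⟩ := hdi
  rcases (primeXi i).irreducible.isUnit_or_isUnit he with hu | hu
  · exact hu
  · exfalso
    apply notdvdX (k := k) h
    obtain ⟨u, rfl⟩ := hu
    exact dvd_trans ⟨(u⁻¹ : _), by rw [he]; simp [mul_assoc]⟩ hdj

private lemma unit_of_deg0_dvd {R : Type*} [CommRing R] [IsDomain R] {a b : R}
    (h : IsRelPrime a b) {g : Polynomial R} (hg : g.natDegree = 0)
    (hdvd : g ∣ (Polynomial.C a * Polynomial.X - Polynomial.C b)) : IsUnit g := by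
  rw [Polynomial.eq_C_of_natDegree_eq_zero hg] at hdvd ⊢
  rw [Polynomial.isUnit_C]
  have h1 : g.coeff 0 ∣ a := by
    have := (Polynomial.C_dvd_iff_dvd_coeff (g.coeff 0) _).mp hdvd 1
    simpa using this
  have h0 : g.coeff 0 ∣ b := by
    have := (Polynomial.C_dvd_iff_dvd_coeff (g.coeff 0) _).mp hdvd 0
    simpa using this
  exact h h1 h0

private lemma irred_linear {R : Type*} [CommRing R] [IsDomain R] {a b : R} (ha : a ≠ 0)
    (h : IsRelPrime a b) : Irreducible (Polynomial.C a * Polynomial.X - Polynomial.C b) := by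
  have hdeg : (Polynomial.C a * Polynomial.X - Polynomial.C b).natDegree = 1 := by
    rw [sub_eq_add_neg, ← Polynomial.C_neg]
    exact Polynomial.natDegree_linear ha
  constructor
  · intro hu
    have := Polynomial.natDegree_eq_zero_of_isUnit hu
    omega
  · intro g g' hgg'
    have hne : Polynomial.C a * Polynomial.X - Polynomial.C b ≠ 0 := fun h0 => by
      rw [h0] at hdeg; simp at hdeg
    have hg0 : g ≠ 0 := fun h0 => hne (by rw [hgg', h0, zero_mul])
    have hg'0 : g' ≠ 0 := fun h0 => hne (by rw [hgg', h0, mul_zero])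
    have hsum : g.natDegree + g'.natDegree = 1 := by
      rw [← Polynomial.natDegree_mul hg0 hg'0, ← hgg', hdeg]
    rcases Nat.eq_zero_or_pos g.natDegree with hz | hp
    · exact Or.inl (unit_of_deg0_dvd h hz ⟨g', hgg'⟩)
    · refine Or.inr (unit_of_deg0_dvd h (by omega) ⟨g, by rw [hgg', mul_comm]⟩)

end Aux

/-- For a field `k` and `s ≥ 3`, the polynomial `XY(Z+U) − UˢZ` is a prime element
of `k[X,Y,Z,U]`. -/
theorem satherPoly_prime {k : Type*} [Field k] (s : ℕ) (hs : 3 ≤ s) :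
    Prime (X 0 * X 1 * (X 2 + X 3) - X 3 ^ s * X 2 : MvPolynomial (Fin 4) k) := by
  rw [← MulEquiv.prime_iff (MvPolynomial.finSuccEquiv k 3).toMulEquiv]
  have h1 : (1 : Fin 4) = Fin.succ 0 := rfl
  have h2 : (2 : Fin 4) = Fin.succ 1 := rfl
  have h3 : (3 : Fin 4) = Fin.succ 2 := rfl
  have he : (MvPolynomial.finSuccEquiv k 3).toMulEquiv
      (X 0 * X 1 * (X 2 + X 3) - X 3 ^ s * X 2 : MvPolynomial (Fin 4) k) =
      Polynomial.C (X 0 * (X 1 + X 2)) * Polynomial.X - Polynomial.C (X 2 ^ s * X 1) := by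
    show (MvPolynomial.finSuccEquiv k 3)
      (X 0 * X 1 * (X 2 + X 3) - X 3 ^ s * X 2 : MvPolynomial (Fin 4) k) = _
    simp only [map_sub, map_mul, map_add, map_pow, h1, h2, h3,
      MvPolynomial.finSuccEquiv_X_zero, MvPolynomial.finSuccEquiv_X_succ]
    ring
  rw [he]
  have ha : (X 0 * (X 1 + X 2) : MvPolynomial (Fin 3) k) ≠ 0 :=
    mul_ne_zero (primeXi 0).ne_zero (fun h0 => by
      have := (primeXi (k := k) 1).ne_zero
      have h12 : ¬ (X 1 : MvPolynomial (Fin 3) k) ∣ X 2 := notdvdX (by decide)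
      exact h12 ⟨-1, by rw [mul_neg_one]; linear_combination h0⟩)
  have hrel : IsRelPrime (X 0 * (X 1 + X 2) : MvPolynomial (Fin 3) k) (X 2 ^ s * X 1) := by
    have h12 : IsRelPrime (X 1 + X 2 : MvPolynomial (Fin 3) k) (X 2) := by
      simpa using (relXX (k := k) (i := (1 : Fin 3)) (j := 2) (by decide)).add_mul_left_left 1
    have h11 : IsRelPrime (X 1 + X 2 : MvPolynomial (Fin 3) k) (X 1) := by
      simpa using (relXX (k := k) (i := (2 : Fin 3)) (j := 1) (by decide)).mul_add_left_left 1
    exact IsRelPrime.mul_left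
      (((relXX (by decide)).pow_right).mul_right (relXX (by decide)))
      ((h12.pow_right).mul_right h11)
  exact (UniqueFactorizationMonoid.irreducible_iff_prime.mp (irred_linear ha hrel))
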